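/- Let μ be a measure on ℝ and ε > 0 such that Λ(θ) := ∫ e^{θt} dμ(t) ∈ (0,∞) for every θ ≤ ε. For θ ≤ ε let f_θ(t) = e^{θt}/Λ(θ) denote the exponential family density with respect to μ, and let μ_θ = ∫ t f_θ(t) dμ(t) denote its mean (which is finite for all θ < ε). Let h : ℝ → [0,1] be measurable and suppose h(t) = 0 for all t < μ₀, where μ₀ is the mean at θ = 0. Define g(θ) = ∫ h(t) f_θ(t) dμ(t). Then g is nondecreasing on (−∞, 0]; in particular sup_{θ ≤ 0} g(θ) = g(0), i.e., the boundary parameter θ = 0 is least favorable. -/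

import Mathlib

open MeasureTheory Metric


lemma aux_hasDerivAt (μ : Measure ℝ) (ε : ℝ)
    (hE : ∀ θ ≤ ε, Integrable (fun t => Real.exp (θ * t)) μ)
    (hM : ∀ θ < ε, Integrable (fun t => t * Real.exp (θ * t)) μ)
    (w : ℝ → ℝ) (hw : Measurable w) (hwb : ∀ t, |w t| ≤ 1)
    (θ₀ : ℝ) (hθ₀ : θ₀ < ε) :
    HasDerivAt (fun θ => ∫ t, w t * Real.exp (θ * t) ∂μ)
      (∫ t, w t * (t * Real.exp (θ₀ * t)) ∂μ) θ₀ := by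
  have hwint : ∀ θ ≤ ε, Integrable (fun t => w t * Real.exp (θ * t)) μ := by
    intro θ hθ
    refine (hE θ hθ).mono' (hw.aestronglyMeasurable.mul ?_) ?_
    · exact (Real.measurable_exp.comp (measurable_id.const_mul θ)).aestronglyMeasurable
    · filter_upwards with t
      have := hwb t
      have he := (Real.exp_pos (θ * t)).le
      rw [norm_mul, Real.norm_eq_abs, Real.norm_eq_abs, Real.abs_exp]
      nlinarith [abs_nonneg (w t)]
  set δ : ℝ := min ((ε - θ₀) / 2) 1 with hδdef
  have hδpos : 0 < δ := lt_min (by linarith) one_pos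
  have hup : θ₀ + δ < ε := by
    have : δ ≤ (ε - θ₀) / 2 := min_le_left _ _
    linarith
  have hlow : θ₀ - δ < ε := by linarith
  have key := hasDerivAt_integral_of_dominated_loc_of_deriv_le (μ := μ)
      (F := fun θ t => w t * Real.exp (θ * t))
      (F' := fun θ t => w t * (t * Real.exp (θ * t)))
      (bound := fun t => |t * Real.exp ((θ₀ + δ) * t)| + |t * Real.exp ((θ₀ - δ) * t)|)
      (ball_mem_nhds θ₀ hδpos)
      (Filter.Eventually.of_forall fun θ => (hw.aestronglyMeasurable.mul
        (Real.measurable_exp.comp (measurable_id.const_mul θ)).aestronglyMeasurable))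
      (hwint θ₀ hθ₀.le)
      (hw.aestronglyMeasurable.mul ((measurable_id.mul
        (Real.measurable_exp.comp (measurable_id.const_mul θ₀))).aestronglyMeasurable))
      ?_ (((hM _ hup).abs).add ((hM _ hlow).abs)) ?_
  · exact key.2
  · filter_upwards with t
    intro x hx
    rw [mem_ball, Real.dist_eq] at hx
    have habs := abs_lt.1 hx
    have hexp : Real.exp (x * t) ≤ Real.exp ((θ₀ + δ) * t) + Real.exp ((θ₀ - δ) * t) := by
      rcases le_or_gt 0 t with ht | ht
      · have : x * t ≤ (θ₀ + δ) * t := by nlinarith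
        have h1 := Real.exp_le_exp.2 this
        have h2 := (Real.exp_pos ((θ₀ - δ) * t)).le
        linarith
      · have : x * t ≤ (θ₀ - δ) * t := by nlinarith
        have h1 := Real.exp_le_exp.2 this
        have h2 := (Real.exp_pos ((θ₀ + δ) * t)).le
        linarith
    have hwt := hwb t
    have hwt0 := abs_nonneg (w t)
    rw [norm_mul, Real.norm_eq_abs, Real.norm_eq_abs]
    have h1 : |t * Real.exp (x * t)| ≤ |t * Real.exp ((θ₀ + δ) * t)| + |t * Real.exp ((θ₀ - δ) * t)| := by
      rw [abs_mul, abs_mul, abs_mul, Real.abs_exp, Real.abs_exp, Real.abs_exp]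
      nlinarith [abs_nonneg t]
    calc |w t| * |t * Real.exp (x * t)| ≤ 1 * |t * Real.exp (x * t)| := by
          apply mul_le_mul_of_nonneg_right hwt (abs_nonneg _)
      _ = |t * Real.exp (x * t)| := one_mul _
      _ ≤ _ := h1
  · filter_upwards with t
    intro x _
    have hd : HasDerivAt (fun y : ℝ => Real.exp (y * t)) (Real.exp (x * t) * t) x :=
      (hasDerivAt_mul_const t).exp
    have := hd.const_mul (w t)
    exact this.congr_deriv (by ring)


/-- Proposition 1, the boundary is least favorable in a one-parameter
exponential family: let `μ` be a measure on `ℝ` with `Λ(θ) = ∫ e^{θt} dμ(t) ∈ (0,∞)` for all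
`θ ≤ ε` (so the exponential family densities `f_θ(t) = e^{θt}/Λ(θ)` and their means
`μ_θ = ∫ t f_θ(t) dμ(t)` are defined, the means being finite for `θ < ε`). If `h : ℝ → [0,1]`
is measurable and vanishes on `(−∞, μ₀)`, then `g(θ) = ∫ h(t) f_θ(t) dμ(t)` is nondecreasing
on `(−∞, 0]`; in particular `g(θ) ≤ g(0)` for all `θ ≤ 0`. -/
theorem boundary_least_favorable
    (μ : Measure ℝ) (ε : ℝ) (hε : 0 < ε)
    (hΛ : ∀ θ ≤ ε, Integrable (fun t => Real.exp (θ * t)) μ ∧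
      0 < ∫ t, Real.exp (θ * t) ∂μ)
    (f : ℝ → ℝ → ℝ)
    (hf : ∀ θ t, f θ t = Real.exp (θ * t) / ∫ s, Real.exp (θ * s) ∂μ)
    (hmeanInt : ∀ θ < ε, Integrable (fun t => t * f θ t) μ)
    (μ₀ : ℝ) (hμ₀ : μ₀ = ∫ t, t * f 0 t ∂μ)
    (h : ℝ → ℝ) (hhm : Measurable h) (hhval : ∀ t, h t ∈ Set.Icc (0 : ℝ) 1)
    (hh0 : ∀ t < μ₀, h t = 0)
    (g : ℝ → ℝ) (hg : ∀ θ, g θ = ∫ t, h t * f θ t ∂μ) :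
    MonotoneOn g (Set.Iic (0 : ℝ)) ∧ ∀ θ ≤ (0 : ℝ), g θ ≤ g 0 := by
  have hE : ∀ θ ≤ ε, Integrable (fun t => Real.exp (θ * t)) μ := fun θ hθ => (hΛ θ hθ).1
  have hΛpos : ∀ θ ≤ ε, (0:ℝ) < ∫ t, Real.exp (θ * t) ∂μ := fun θ hθ => (hΛ θ hθ).2
  -- integrability of t * exp(θ t)
  have hMint : ∀ θ < ε, Integrable (fun t => t * Real.exp (θ * t)) μ := by
    intro θ hθ
    have hne : (∫ s, Real.exp (θ * s) ∂μ) ≠ 0 := (hΛpos θ hθ.le).ne'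
    have h1 := (hmeanInt θ hθ).const_mul (∫ s, Real.exp (θ * s) ∂μ)
    have heq : (fun t => (∫ s, Real.exp (θ * s) ∂μ) * (t * f θ t))
        = fun t => t * Real.exp (θ * t) := by
      funext t
      rw [hf]
      field_simp
    rwa [heq] at h1
  -- h is bounded by 1 in abs
  have hhabs : ∀ t, |h t| ≤ 1 := by
    intro t
    rcases hhval t with ⟨h0, h1⟩
    rw [abs_of_nonneg h0]; exact h1
  -- integrability of h t * exp(θ t)
  have hGint : ∀ θ ≤ ε, Integrable (fun t => h t * Real.exp (θ * t)) μ := by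
    intro θ hθ
    refine (hE θ hθ).mono' (hhm.aestronglyMeasurable.mul ?_) ?_
    · exact (Real.measurable_exp.comp (measurable_id.const_mul θ)).aestronglyMeasurable
    · filter_upwards with t
      have := hhabs t
      have he := (Real.exp_pos (θ * t)).le
      rw [norm_mul, Real.norm_eq_abs, Real.norm_eq_abs, Real.abs_exp]
      nlinarith [abs_nonneg (h t)]
  -- integrability of h t * (t * exp (θ t))
  have hNint : ∀ θ < ε, Integrable (fun t => h t * (t * Real.exp (θ * t))) μ := by
    intro θ hθ
    refine (hMint θ hθ).abs.mono' (hhm.aestronglyMeasurable.mul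
      ((measurable_id.mul
        (Real.measurable_exp.comp (measurable_id.const_mul θ))).aestronglyMeasurable)) ?_
    filter_upwards with t
    have := hhabs t
    rw [norm_mul, Real.norm_eq_abs, Real.norm_eq_abs]
    nlinarith [abs_nonneg (h t), abs_nonneg (t * Real.exp (θ * t))]
  -- identity: g θ = G θ / Λ θ
  have hgq : ∀ θ, g θ = (∫ t, h t * Real.exp (θ * t) ∂μ) / ∫ t, Real.exp (θ * t) ∂μ := by
    intro θ
    rw [hg θ]
    have : (fun t => h t * f θ t)
        = fun t => (h t * Real.exp (θ * t)) / ∫ s, Real.exp (θ * s) ∂μ := by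
      funext t; rw [hf]; ring
    rw [this, integral_div]
  -- μ₀ * ∫ 1 = ∫ t
  have hid_int : Integrable (fun t : ℝ => t) μ := by
    have := hMint 0 hε
    simpa using this
  have hone_int : Integrable (fun _ : ℝ => (1:ℝ)) μ := by simpa using hE 0 hε.le
  have hΛ0pos : (0:ℝ) < ∫ t, (1:ℝ) ∂μ := by
    have := hΛpos 0 hε.le
    simpa using this
  have hμ₀eq : μ₀ * ∫ t, (1:ℝ) ∂μ = ∫ t, t ∂μ := by
    have : μ₀ = (∫ t, t ∂μ) / ∫ t, (1:ℝ) ∂μ := by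
      rw [hμ₀]
      simp only [hf, zero_mul, Real.exp_zero]
      rw [show (fun t : ℝ => t * (1 / ∫ s, (1:ℝ) ∂μ)) = fun t : ℝ => t / ∫ s, (1:ℝ) ∂μ by
        funext t; ring, integral_div]
    rw [this, div_mul_cancel₀]
    exact hΛ0pos.ne'
  -- mean inequality: ∫ t * e^{θt} ≤ μ₀ * ∫ e^{θt} for θ ≤ 0
  have hmean : ∀ θ ≤ (0:ℝ), (∫ t, t * Real.exp (θ * t) ∂μ)
      ≤ μ₀ * ∫ t, Real.exp (θ * t) ∂μ := by
    intro θ hθ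
    have hθε : θ < ε := lt_of_le_of_lt hθ hε
    have hL : Integrable (fun t => (t - μ₀) * Real.exp (θ * t)) μ := by
      have := (hMint θ hθε).sub ((hE θ hθε.le).const_mul μ₀)
      refine this.congr ?_
      filter_upwards with t
      simp only [Pi.sub_apply]
      ring
    have hR : Integrable (fun t => Real.exp (θ * μ₀) * (t - μ₀)) μ := by
      exact ((hid_int.sub (hone_int.const_mul μ₀)).const_mul (Real.exp (θ * μ₀))).congr (by
        filter_upwards with t; simp only [Pi.sub_apply]; ring)
    have hpt : ∀ t, (t - μ₀) * Real.exp (θ * t) ≤ Real.exp (θ * μ₀) * (t - μ₀) := by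
      intro t
      have hsplit : Real.exp (θ * t) = Real.exp (θ * μ₀) * Real.exp (θ * (t - μ₀)) := by
        rw [← Real.exp_add]; ring_nf
      have hp := Real.exp_pos (θ * μ₀)
      rcases le_or_gt μ₀ t with ht | ht
      · have h1 : Real.exp (θ * (t - μ₀)) ≤ 1 := by
          rw [show (1:ℝ) = Real.exp 0 by simp]
          exact Real.exp_le_exp.2 (by nlinarith)
        have h2 := (Real.exp_pos (θ * (t - μ₀))).le
        rw [hsplit]
        have key : (t - μ₀) * (Real.exp (θ * μ₀) * Real.exp (θ * (t - μ₀)))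
            ≤ (t - μ₀) * (Real.exp (θ * μ₀) * 1) :=
          mul_le_mul_of_nonneg_left (by nlinarith) (sub_nonneg.2 ht)
        nlinarith [key]
      · have h1 : (1:ℝ) ≤ Real.exp (θ * (t - μ₀)) := by
          rw [show (1:ℝ) = Real.exp 0 by simp]
          exact Real.exp_le_exp.2 (by nlinarith)
        rw [hsplit]
        have key : (t - μ₀) * (Real.exp (θ * μ₀) * Real.exp (θ * (t - μ₀)))
            ≤ (t - μ₀) * (Real.exp (θ * μ₀) * 1) :=
          mul_le_mul_of_nonpos_left (by nlinarith) (by linarith : t - μ₀ ≤ 0)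
        nlinarith [key]
    have hint := integral_mono hL hR hpt
    have hLeq : (∫ t, (t - μ₀) * Real.exp (θ * t) ∂μ)
        = (∫ t, t * Real.exp (θ * t) ∂μ) - μ₀ * ∫ t, Real.exp (θ * t) ∂μ := by
      rw [show (fun t => (t - μ₀) * Real.exp (θ * t))
          = fun t => t * Real.exp (θ * t) - μ₀ * Real.exp (θ * t) by funext t; ring,
        integral_sub (hMint θ hθε) ((hE θ hθε.le).const_mul μ₀), integral_const_mul]
    have hReq : (∫ t, Real.exp (θ * μ₀) * (t - μ₀) ∂μ) = 0 := by
      rw [integral_const_mul, show (fun t : ℝ => t - μ₀) = fun t : ℝ => t - μ₀ * 1 by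
        funext t; ring]
      rw [integral_sub hid_int (by simpa using hone_int.const_mul μ₀)]
      have : (∫ t : ℝ, μ₀ * 1 ∂μ) = μ₀ * ∫ t, (1:ℝ) ∂μ := by
        rw [← integral_const_mul]
      rw [this, hμ₀eq]
      ring
    rw [hLeq, hReq] at hint
    linarith
  -- derivative of g at each θ ≤ 0
  have hgderiv : ∀ θ ≤ (0:ℝ), HasDerivAt g
      (((∫ t, h t * (t * Real.exp (θ * t)) ∂μ) * (∫ t, Real.exp (θ * t) ∂μ)
        - (∫ t, h t * Real.exp (θ * t) ∂μ) * (∫ t, t * Real.exp (θ * t) ∂μ))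
        / (∫ t, Real.exp (θ * t) ∂μ) ^ 2) θ := by
    intro θ hθ
    have hθε : θ < ε := lt_of_le_of_lt hθ hε
    have hG := aux_hasDerivAt μ ε hE hMint h hhm hhabs θ hθε
    have hΛd := aux_hasDerivAt μ ε hE hMint (fun _ => 1) measurable_const
      (fun t => by simp) θ hθε
    simp only [one_mul] at hΛd
    have hdiv := hG.div hΛd (hΛpos θ hθε.le).ne'
    have : g = fun θ => (∫ t, h t * Real.exp (θ * t) ∂μ) / ∫ t, Real.exp (θ * t) ∂μ :=
      funext hgq
    rw [this]
    exact hdiv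
  -- nonnegativity of the derivative for θ ≤ 0
  have hnum : ∀ θ ≤ (0:ℝ),
      0 ≤ (∫ t, h t * (t * Real.exp (θ * t)) ∂μ) * (∫ t, Real.exp (θ * t) ∂μ)
        - (∫ t, h t * Real.exp (θ * t) ∂μ) * (∫ t, t * Real.exp (θ * t) ∂μ) := by
    intro θ hθ
    have hθε : θ < ε := lt_of_le_of_lt hθ hε
    have hGnn : 0 ≤ ∫ t, h t * Real.exp (θ * t) ∂μ :=
      integral_nonneg fun t => mul_nonneg (hhval t).1 (Real.exp_pos _).le
    have hNge : μ₀ * (∫ t, h t * Real.exp (θ * t) ∂μ)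
        ≤ ∫ t, h t * (t * Real.exp (θ * t)) ∂μ := by
      rw [← integral_const_mul]
      refine integral_mono ((hGint θ hθε.le).const_mul μ₀) (hNint θ hθε) ?_
      intro t
      rcases le_or_gt μ₀ t with ht | ht
      · have h0 := (hhval t).1
        have he := (Real.exp_pos (θ * t)).le
        simp only
        nlinarith [mul_le_mul_of_nonneg_right ht (mul_nonneg h0 he)]
      · simp [hh0 t ht]
    have hM := hmean θ hθ
    have hΛp := hΛpos θ hθε.le
    nlinarith [mul_le_mul_of_nonneg_right hNge hΛp.le,
      mul_le_mul_of_nonneg_left hM hGnn]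
  have hmono : MonotoneOn g (Set.Iic (0:ℝ)) := by
    apply monotoneOn_of_deriv_nonneg (convex_Iic 0)
    · intro x hx
      exact (hgderiv x hx).continuousAt.continuousWithinAt
    · rw [interior_Iic]
      intro x hx
      exact (hgderiv x hx.le).differentiableAt.differentiableWithinAt
    · rw [interior_Iic]
      intro x hx
      rw [(hgderiv x hx.le).deriv]
      exact div_nonneg (hnum x hx.le) (sq_nonneg _)
  exact ⟨hmono, fun θ hθ => hmono hθ (le_refl (0:ℝ) : (0:ℝ) ∈ Set.Iic (0:ℝ)) hθ⟩
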